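/- Let G = (V,E) be a finite bi-directed graph, let C ⊆ V be a nonempty connected set, and let A ⊆ V. Then there exists a set B with A ⊆ B ⊆ V such that C is an inclusion-maximal connected subset of B (i.e. C ∈ [B]_G) if and only if spo(C) ∩ (A∖C) = ∅. (Equivalently: the variable q_C appears in the expansion p_A^V = Σ_{B : A ⊆ B ⊆ V} (−1)^{|B∖A|} ∏_{C* ∈ [B]_G} q_{C*} if and only if spo(C) ∩ (A∖C) = ∅.) -/

import Mathlib

open Finset

namespace BMMI

variable {V : Type*} [Fintype V] [DecidableEq V]

/-- `Pr p A a` is the probability of the event `X_A = a|_A` under `p`. -/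
def Pr (p : (V → Bool) → ℝ) (A : Finset V) (a : V → Bool) : ℝ :=
  ∑ i ∈ Finset.univ.filter (fun i : V → Bool => ∀ v ∈ A, i v = a v), p i

/-- `p` is a binary distribution on `V`. -/
def IsDist (p : (V → Bool) → ℝ) : Prop :=
  (∀ i, 0 ≤ p i) ∧ ∑ i : V → Bool, p i = 1

/-- `Pr2 p S T a b` is the probability of the joint event `X_S = a|_S, X_T = b|_T`. -/
def Pr2 (p : (V → Bool) → ℝ) (S T : Finset V) (a b : V → Bool) : ℝ :=
  ∑ i ∈ Finset.univ.filter
      (fun i : V → Bool => (∀ v ∈ S, i v = a v) ∧ (∀ v ∈ T, i v = b v)), p i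

/-- `X_S` and `X_T` are independent under `p`. -/
def Indep (p : (V → Bool) → ℝ) (S T : Finset V) : Prop :=
  ∀ a b : V → Bool, Pr2 p S T a b = Pr p S a * Pr p T b

/-- `spo G A` consists of `A` together with all vertices adjacent to a vertex of `A`. -/
def spo (G : SimpleGraph V) [DecidableRel G.Adj] (A : Finset V) : Finset V :=
  Finset.univ.filter (fun w => w ∈ A ∨ ∃ v ∈ A, G.Adj v w)

/-- `C` is connected in `G`: every pair of vertices of `C` is joined by a walk
all of whose vertices lie in `C`. -/
def Conn (G : SimpleGraph V) (C : Finset V) : Prop :=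
  ∀ v ∈ C, ∀ w ∈ C, ∃ W : G.Walk v w, ∀ x ∈ W.support, x ∈ C

/-- The connected set Markov property for the bi-directed graph `G`. -/
def CSMP (G : SimpleGraph V) [DecidableRel G.Adj] (p : (V → Bool) → ℝ) : Prop :=
  ∀ C : Finset V, C.Nonempty → Conn G C → Indep p C (Finset.univ \ spo G C)

/-- `C` is an inclusion-maximal connected subset of `D` (a connected component of the
induced subgraph on `D`). -/
def IsMaxConnComp (G : SimpleGraph V) (D C : Finset V) : Prop :=
  C ⊆ D ∧ C.Nonempty ∧ Conn G C ∧
    ∀ C' : Finset V, C ⊆ C' → C' ⊆ D → Conn G C' → C' = C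

/-- The Möbius parameter `q_A(p) = P(X_A = 0)`. -/
def qM (p : (V → Bool) → ℝ) (A : Finset V) : ℝ := Pr p A (fun _ => false)

/-- Lemma (expansion): for a nonempty connected set `C` and any `A ⊆ V`, there is a
set `B ⊇ A` having `C` among its inclusion-maximal connected subsets iff
`spo(C) ∩ (A ∖ C) = ∅`; i.e. `q_C` appears in the expansion of `p_A^V` iff
`spo(C) ∩ (A ∖ C) = ∅`. -/
lemma cross_edge {G : SimpleGraph V} {C : Finset V} :
    ∀ {x c : V} (W : G.Walk x c), x ∉ C → c ∈ C →
    ∃ u v, u ∈ W.support ∧ v ∈ W.support ∧ u ∉ C ∧ v ∈ C ∧ G.Adj u v := by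
  intro x c W
  induction W with
  | nil => intro hx hc; exact absurd hc hx
  | @cons a b c h W' ih =>
    intro hx hc
    by_cases hb : b ∈ C
    · exact ⟨a, b, by simp, by simp [SimpleGraph.Walk.support_cons], hx, hb, h⟩
    · obtain ⟨u, v, hu, hv, hunc, hvc, hadj⟩ := ih hb hc
      exact ⟨u, v, by simp [SimpleGraph.Walk.support_cons, hu],
        by simp [SimpleGraph.Walk.support_cons, hv], hunc, hvc, hadj⟩

theorem stmt13 (G : SimpleGraph V) [DecidableRel G.Adj] (C : Finset V)
    (hC : C.Nonempty) (hconn : Conn G C) (A : Finset V) :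
    (∃ B : Finset V, A ⊆ B ∧ IsMaxConnComp G B C) ↔ spo G C ∩ (A \ C) = ∅ := by
  constructor
  · rintro ⟨B, hAB, hCB, _, _, hmax⟩
    rw [Finset.eq_empty_iff_forall_notMem]
    intro w hw
    rw [Finset.mem_inter, Finset.mem_sdiff] at hw
    obtain ⟨hwspo, hwA, hwC⟩ := hw
    rw [spo, Finset.mem_filter] at hwspo
    obtain ⟨v, hvC, hadj⟩ := hwspo.2.resolve_left hwC
    -- C ∪ {w} is connected, contradicting maximality
    have hconn' : Conn G (insert w C) := by
      intro a ha b hb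
      rw [Finset.mem_insert] at ha hb
      have mkw : ∀ d ∈ C, ∃ W : G.Walk w d, ∀ x ∈ W.support, x ∈ insert w C := by
        intro d hd
        obtain ⟨W0, hW0⟩ := hconn v hvC d hd
        refine ⟨SimpleGraph.Walk.cons hadj.symm W0, ?_⟩
        intro x hx
        rw [SimpleGraph.Walk.support_cons, List.mem_cons] at hx
        rcases hx with hx | hx
        · simp [hx]
        · exact Finset.mem_insert_of_mem (hW0 x hx)
      rcases ha with rfl | ha
      · rcases hb with rfl | hb
        · exact ⟨SimpleGraph.Walk.nil, by simp⟩
        · exact mkw b hb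
      · rcases hb with rfl | hb
        · obtain ⟨W, hW⟩ := mkw a ha
          exact ⟨W.reverse, by simpa using hW⟩
        · obtain ⟨W, hW⟩ := hconn a ha b hb
          exact ⟨W, fun x hx => Finset.mem_insert_of_mem (hW x hx)⟩
    have := hmax (insert w C) (Finset.subset_insert _ _)
      (Finset.insert_subset (hAB hwA) hCB) hconn'
    exact hwC (this ▸ Finset.mem_insert_self w C)
  · intro hempty
    refine ⟨A ∪ C, Finset.subset_union_left, Finset.subset_union_right, hC, hconn, ?_⟩
    intro C' hCC' hC'B hconn'
    by_contra hne
    obtain ⟨x, hxC', hxC⟩ := Finset.exists_of_ssubset (hCC'.ssubset_of_ne (Ne.symm hne))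
    obtain ⟨c, hc⟩ := hC
    obtain ⟨W, hW⟩ := hconn' x hxC' c (hCC' hc)
    obtain ⟨u, v, hu, hv, hunc, hvc, hadj⟩ := cross_edge (C := C) W hxC hc
    have huA : u ∈ A := by
      have := hC'B (hW u hu)
      rw [Finset.mem_union] at this
      exact this.resolve_right hunc
    have : u ∈ spo G C ∩ (A \ C) := by
      rw [Finset.mem_inter, Finset.mem_sdiff, spo, Finset.mem_filter]
      exact ⟨⟨Finset.mem_univ u, Or.inr ⟨v, hvc, hadj.symm⟩⟩, huA, hunc⟩
    rw [hempty] at this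
    exact absurd this (Finset.notMem_empty u)

end BMMI
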